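/- Let u be a classical solution of the heat equation on [0,1]×[−1,0] with u(t,−1) = 0 for all t ∈ [0,1] and u(0,0) = 0, and set h(t) = ∫_0^t u(s,0) ds. Let v be a classical solution of the wave equation on [0,1]×[0,1] with v(t,1) = 0, v(t,0) = h(t) for all t ∈ [0,1], and initial data v(0,x) = v₀(x), ∂_t v(0,x) = v₁(x) (v₀ continuously differentiable). Assume the interface equation with inertia ∂_x u(t,0) + u(t,0) + ∂_t u(t,0) = v₀′(t) + v₁(t) holds for all t ∈ [0,1]. Then h is twice continuously differentiable with h(0) = h′(0) = 0, and (u,v,h) satisfies the point-mass coupling conditions of Problem 2: u(t,0) = h′(t) = ∂_t v(t,0) and h″(t) = ∂_x v(t,0) − ∂_x u(t,0) for every t ∈ [0,1]. -/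

import Mathlib

open Set Real MeasureTheory intervalIntegral

/-- A classical solution of the heat equation `∂_t u = ∂_x² u` on `[0,T] × [−1,0]`:
`u` is continuous on the closed rectangle, the partial derivatives `ut = ∂_t u`,
`ux = ∂_x u`, `uxx = ∂_x² u` exist and are continuous there, and `∂_t u = ∂_x² u`. -/
structure IsHeatSol (T : ℝ) (u ut ux uxx : ℝ → ℝ → ℝ) : Prop where
  contu : ContinuousOn (fun p : ℝ × ℝ => u p.1 p.2) (Icc 0 T ×ˢ Icc (-1) 0)
  hut : ∀ t ∈ Icc (0:ℝ) T, ∀ x ∈ Icc (-1:ℝ) 0, HasDerivAt (fun τ => u τ x) (ut t x) t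
  hux : ∀ t ∈ Icc (0:ℝ) T, ∀ x ∈ Icc (-1:ℝ) 0, HasDerivAt (fun y => u t y) (ux t x) x
  huxx : ∀ t ∈ Icc (0:ℝ) T, ∀ x ∈ Icc (-1:ℝ) 0, HasDerivAt (fun y => ux t y) (uxx t x) x
  contut : ContinuousOn (fun p : ℝ × ℝ => ut p.1 p.2) (Icc 0 T ×ˢ Icc (-1) 0)
  contux : ContinuousOn (fun p : ℝ × ℝ => ux p.1 p.2) (Icc 0 T ×ˢ Icc (-1) 0)
  contuxx : ContinuousOn (fun p : ℝ × ℝ => uxx p.1 p.2) (Icc 0 T ×ˢ Icc (-1) 0)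
  heat : ∀ t ∈ Icc (0:ℝ) T, ∀ x ∈ Icc (-1:ℝ) 0, ut t x = uxx t x

/-- A classical solution of the wave equation `∂_t² v = ∂_x² v` on `[0,T] × [0,1]`:
`v` is twice continuously differentiable up to the boundary, with first partial
derivatives `vt`, `vx`, second partial derivatives `vtt`, `vxx` and mixed partial
derivative `vtx`, all continuous on the closed rectangle. -/
structure IsWaveSol (T : ℝ) (v vt vx vtt vtx vxx : ℝ → ℝ → ℝ) : Prop where
  contv : ContinuousOn (fun p : ℝ × ℝ => v p.1 p.2) (Icc 0 T ×ˢ Icc 0 1)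
  hvt : ∀ t ∈ Icc (0:ℝ) T, ∀ x ∈ Icc (0:ℝ) 1, HasDerivAt (fun τ => v τ x) (vt t x) t
  hvx : ∀ t ∈ Icc (0:ℝ) T, ∀ x ∈ Icc (0:ℝ) 1, HasDerivAt (fun y => v t y) (vx t x) x
  hvtt : ∀ t ∈ Icc (0:ℝ) T, ∀ x ∈ Icc (0:ℝ) 1, HasDerivAt (fun τ => vt τ x) (vtt t x) t
  hvtx : ∀ t ∈ Icc (0:ℝ) T, ∀ x ∈ Icc (0:ℝ) 1, HasDerivAt (fun y => vt t y) (vtx t x) x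
  hvxt : ∀ t ∈ Icc (0:ℝ) T, ∀ x ∈ Icc (0:ℝ) 1, HasDerivAt (fun τ => vx τ x) (vtx t x) t
  hvxx : ∀ t ∈ Icc (0:ℝ) T, ∀ x ∈ Icc (0:ℝ) 1, HasDerivAt (fun y => vx t y) (vxx t x) x
  contvt : ContinuousOn (fun p : ℝ × ℝ => vt p.1 p.2) (Icc 0 T ×ˢ Icc 0 1)
  contvx : ContinuousOn (fun p : ℝ × ℝ => vx p.1 p.2) (Icc 0 T ×ˢ Icc 0 1)
  contvtt : ContinuousOn (fun p : ℝ × ℝ => vtt p.1 p.2) (Icc 0 T ×ˢ Icc 0 1)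
  contvtx : ContinuousOn (fun p : ℝ × ℝ => vtx p.1 p.2) (Icc 0 T ×ˢ Icc 0 1)
  contvxx : ContinuousOn (fun p : ℝ × ℝ => vxx p.1 p.2) (Icc 0 T ×ˢ Icc 0 1)
  wave : ∀ t ∈ Icc (0:ℝ) T, ∀ x ∈ Icc (0:ℝ) 1, vtt t x = vxx t x

open Filter


lemma abs_sub_le_of_uIoc {a b y : ℝ} (hy : y ∈ Set.uIoc a b) : |y - a| ≤ |b - a| := by
  have h1 : a ⊓ b < y := hy.1
  have h2 : y ≤ a ⊔ b := hy.2
  have hmax : a ⊔ b - a ⊓ b = |b - a| := max_sub_min_eq_abs a b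
  rw [abs_sub_le_iff]
  constructor <;>
    linarith [le_max_left a b, min_le_left a b, le_max_right a b, min_le_right a b]

/-- A function on the unit square whose two continuous partial derivatives agree
is constant along the leftward characteristics `s ↦ (t-s, s)`. -/
lemma char_eq (w wt wx : ℝ → ℝ → ℝ)
    (cw : ContinuousOn (fun p : ℝ × ℝ => w p.1 p.2) (Icc 0 1 ×ˢ Icc 0 1))
    (hwt : ∀ a ∈ Icc (0:ℝ) 1, ∀ b ∈ Icc (0:ℝ) 1, HasDerivAt (fun τ => w τ b) (wt a b) a)
    (hwx : ∀ a ∈ Icc (0:ℝ) 1, ∀ b ∈ Icc (0:ℝ) 1, HasDerivAt (fun y => w a y) (wx a b) b)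
    (cwt : ContinuousOn (fun p : ℝ × ℝ => wt p.1 p.2) (Icc 0 1 ×ˢ Icc 0 1))
    (cwx : ContinuousOn (fun p : ℝ × ℝ => wx p.1 p.2) (Icc 0 1 ×ˢ Icc 0 1))
    (heq : ∀ a ∈ Icc (0:ℝ) 1, ∀ b ∈ Icc (0:ℝ) 1, wt a b = wx a b)
    {t : ℝ} (ht : t ∈ Icc (0:ℝ) 1) : w t 0 = w 0 t := by
  have hK : IsCompact (Icc (0:ℝ) 1 ×ˢ Icc (0:ℝ) 1) := isCompact_Icc.prod isCompact_Icc
  have ucx := Metric.uniformContinuousOn_iff.1 (hK.uniformContinuousOn_of_continuous cwx)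
  have uct := Metric.uniformContinuousOn_iff.1 (hK.uniformContinuousOn_of_continuous cwt)
  have h01 : ∀ {y : ℝ}, y ∈ Icc 0 t → y ∈ Icc (0:ℝ) 1 :=
    fun hy => ⟨hy.1, hy.2.trans ht.2⟩
  set Φ : ℝ → ℝ := fun s => w (t - s) s with hΦdef
  have key : ∀ s ∈ Icc (0:ℝ) t, HasDerivWithinAt Φ 0 (Icc 0 t) s := by
    intro s hs
    have hts : t - s ∈ Icc 0 t := ⟨by linarith [hs.2], by linarith [hs.1]⟩
    rw [hasDerivWithinAt_iff_tendsto_slope, Metric.tendsto_nhdsWithin_nhds]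
    intro ε hε
    obtain ⟨δ₁, hδ₁pos, hδ₁⟩ := ucx (ε/3) (by positivity)
    obtain ⟨δ₂, hδ₂pos, hδ₂⟩ := uct (ε/3) (by positivity)
    refine ⟨min δ₁ δ₂, by positivity, ?_⟩
    intro s' hs'mem hdist
    obtain ⟨hs'I, hs'ne⟩ := hs'mem
    have hne : s' ≠ s := by simpa using hs'ne
    have hds : |s' - s| < min δ₁ δ₂ := by
      simpa [Real.dist_eq] using hdist
    have hds1 : |s' - s| < δ₁ := lt_of_lt_of_le hds (min_le_left _ _)
    have hds2 : |s' - s| < δ₂ := lt_of_lt_of_le hds (min_le_right _ _)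
    have hts' : t - s' ∈ Icc 0 t := ⟨by linarith [hs'I.2], by linarith [hs'I.1]⟩
    have habs : |t - s' - (t - s)| = |s' - s| := by
      rw [show t - s' - (t - s) = -(s' - s) by ring, abs_neg]
    -- the two FTC identities
    have cont1 : ContinuousOn (fun y => wx (t - s') y) (Icc 0 1) := by
      have : (fun y => wx (t - s') y)
          = (fun p : ℝ × ℝ => wx p.1 p.2) ∘ (fun y => ((t - s' : ℝ), y)) := rfl
      rw [this]
      exact cwx.comp ((continuous_const.prodMk continuous_id).continuousOn)
        (fun y hy => ⟨h01 hts', hy⟩)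
    have cont2 : ContinuousOn (fun τ => wt τ s) (Icc 0 1) := by
      have : (fun τ => wt τ s)
          = (fun p : ℝ × ℝ => wt p.1 p.2) ∘ (fun τ => (τ, s)) := rfl
      rw [this]
      exact cwt.comp ((continuous_id.prodMk continuous_const).continuousOn)
        (fun τ hτ => ⟨hτ, h01 hs⟩)
    have hsub1 : uIcc s s' ⊆ Icc 0 t := uIcc_subset_Icc hs hs'I
    have hsub2 : uIcc (t - s) (t - s') ⊆ Icc 0 t := uIcc_subset_Icc hts hts'
    have int1 : IntervalIntegrable (fun y => wx (t - s') y) volume s s' :=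
      (cont1.mono (fun y hy => h01 (hsub1 hy))).intervalIntegrable
    have int2 : IntervalIntegrable (fun τ => wt τ s) volume (t - s) (t - s') :=
      (cont2.mono (fun τ hτ => h01 (hsub2 hτ))).intervalIntegrable
    have e1 : ∫ y in s..s', wx (t - s') y = w (t - s') s' - w (t - s') s :=
      integral_eq_sub_of_hasDerivAt
        (fun y hy => hwx _ (h01 hts') y (h01 (hsub1 hy))) int1
    have e2 : ∫ τ in (t - s)..(t - s'), wt τ s = w (t - s') s - w (t - s) s :=
      integral_eq_sub_of_hasDerivAt
        (fun τ hτ => hwt τ (h01 (hsub2 hτ)) s (h01 hs)) int2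
    -- error bounds
    have memp : ((t - s, s) : ℝ × ℝ) ∈ Icc (0:ℝ) 1 ×ˢ Icc (0:ℝ) 1 := ⟨h01 hts, h01 hs⟩
    have b1 : ‖(∫ y in s..s', wx (t - s') y) - (s' - s) * wx (t - s) s‖
        ≤ ε/3 * |s' - s| := by
      have hc : (s' - s) * wx (t - s) s = ∫ _y in s..s', wx (t - s) s := by
        rw [intervalIntegral.integral_const, smul_eq_mul]
      rw [hc, ← intervalIntegral.integral_sub int1 intervalIntegrable_const]
      apply intervalIntegral.norm_integral_le_of_norm_le_const
      intro y hy
      have hyI : y ∈ Icc 0 t := hsub1 (uIoc_subset_uIcc hy)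
      have hys : |y - s| ≤ |s' - s| := abs_sub_le_of_uIoc hy
      have hd : dist ((t - s', y) : ℝ × ℝ) ((t - s, s) : ℝ × ℝ) < δ₁ := by
        rw [Prod.dist_eq]
        simp only [Real.dist_eq]
        apply max_lt
        · exact habs ▸ hds1
        · exact lt_of_le_of_lt hys hds1
      exact le_of_lt (hδ₁ _ ⟨h01 hts', h01 hyI⟩ _ memp hd)
    have b2 : ‖(∫ τ in (t - s)..(t - s'), wt τ s) - (s - s') * wt (t - s) s‖
        ≤ ε/3 * |s' - s| := by
      have hc : (s - s') * wt (t - s) s = ∫ _τ in (t - s)..(t - s'), wt (t - s) s := by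
        rw [intervalIntegral.integral_const, smul_eq_mul]
        ring_nf
      rw [hc, ← intervalIntegral.integral_sub int2 intervalIntegrable_const]
      calc ‖∫ τ in (t - s)..(t - s'), (wt τ s - wt (t - s) s)‖
          ≤ ε/3 * |t - s' - (t - s)| := by
            apply intervalIntegral.norm_integral_le_of_norm_le_const
            intro τ hτ
            have hτI : τ ∈ Icc 0 t := hsub2 (uIoc_subset_uIcc hτ)
            have hτs : |τ - (t - s)| ≤ |s' - s| := habs ▸ abs_sub_le_of_uIoc hτ
            have hd : dist ((τ, s) : ℝ × ℝ) ((t - s, s) : ℝ × ℝ) < δ₂ := by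
              rw [Prod.dist_eq]
              simp only [Real.dist_eq, sub_self, abs_zero]
              apply max_lt
              · exact lt_of_le_of_lt hτs hds2
              · exact hδ₂pos
            exact le_of_lt (hδ₂ _ ⟨h01 hτI, h01 hs⟩ _ memp hd)
          _ = ε/3 * |s' - s| := by rw [habs]
    -- combine
    have hwp : wt (t - s) s = wx (t - s) s := heq _ (h01 hts) _ (h01 hs)
    have hΦdiff : Φ s' - Φ s
        = ((∫ y in s..s', wx (t - s') y) - (s' - s) * wx (t - s) s)
          + ((∫ τ in (t - s)..(t - s'), wt τ s) - (s - s') * wt (t - s) s) := by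
      simp only [hΦdef]
      rw [e1, e2, hwp]
      ring
    have hbound : ‖Φ s' - Φ s‖ ≤ (2 * ε / 3) * |s' - s| := by
      rw [hΦdiff]
      calc _ ≤ ε/3 * |s' - s| + ε/3 * |s' - s| := norm_add_le_of_le b1 b2
        _ = (2 * ε / 3) * |s' - s| := by ring
    have hpos : (0:ℝ) < |s' - s| := by
      rw [abs_pos]; exact sub_ne_zero.2 hne
    rw [Real.dist_eq, sub_zero, slope_def_field, abs_div]
    rw [div_lt_iff₀ hpos]
    have hb' : |Φ s' - Φ s| ≤ 2 * ε / 3 * |s' - s| := by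
      simpa [Real.norm_eq_abs] using hbound
    nlinarith
  -- Φ is constant on [0, t]
  have hΦc : ContinuousOn Φ (Icc 0 t) := by
    have : Φ = (fun p : ℝ × ℝ => w p.1 p.2) ∘ (fun s => ((t - s : ℝ), s)) := rfl
    rw [this]
    exact cw.comp ((continuous_const.sub continuous_id).prodMk continuous_id).continuousOn
      (fun s hs => ⟨h01 (show t - s ∈ Icc 0 t from ⟨by linarith [hs.2], by linarith [hs.1]⟩), h01 hs⟩)
  have hconst := constant_of_has_deriv_right_zero hΦc (fun x hx =>
    (key x (Ico_subset_Icc_self hx)).mono_of_mem_nhdsWithin (Icc_mem_nhdsGE_of_mem hx))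
  have := hconst t (right_mem_Icc.2 ht.1)
  simpa [hΦdef] using this.symm

open Topology in
lemma hasDerivWithinAt_singleton' (f : ℝ → ℝ) (c x : ℝ) :
    HasDerivWithinAt f c {x} x := by
  rw [hasDerivWithinAt_iff_tendsto_slope]
  simp only [sdiff_self, Set.bot_eq_empty, nhdsWithin_empty]
  exact tendsto_bot

open Topology in
lemma hasDerivWithinAt_primitive_Icc {f : ℝ → ℝ} (hf : ContinuousOn f (Icc 0 1))
    {t : ℝ} (ht : t ∈ Icc (0:ℝ) 1) :
    HasDerivWithinAt (fun b => ∫ s in (0:ℝ)..b, f s) (f t) (Icc 0 1) t := by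
  have hint : IntervalIntegrable f volume 0 t :=
    (hf.mono (uIcc_subset_Icc (left_mem_Icc.2 zero_le_one) ht)).intervalIntegrable
  have hright : HasDerivWithinAt (fun b => ∫ s in (0:ℝ)..b, f s) (f t) (Icc t 1) t := by
    rcases eq_or_lt_of_le ht.2 with h1 | h1
    · rw [h1, Icc_self]
      exact hasDerivWithinAt_singleton' _ _ _
    · have hmem : Icc (0:ℝ) 1 ∈ 𝓝[>] t := Icc_mem_nhdsGT_of_mem ⟨ht.1, h1⟩
      have hmeas : StronglyMeasurableAtFilter f (𝓝[>] t) volume :=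
        ⟨Icc 0 1, hmem, hf.aestronglyMeasurable measurableSet_Icc⟩
      exact (intervalIntegral.integral_hasDerivWithinAt_right hint hmeas
        ((hf t ht).mono_of_mem_nhdsWithin hmem)).mono Icc_subset_Ici_self
  have hleft : HasDerivWithinAt (fun b => ∫ s in (0:ℝ)..b, f s) (f t) (Icc 0 t) t := by
    rcases eq_or_lt_of_le ht.1 with h0 | h0
    · rw [← h0, Icc_self]
      exact hasDerivWithinAt_singleton' _ _ _
    · have hmem' : Icc (0:ℝ) 1 ∈ 𝓝[≤] t := Icc_mem_nhdsLE_of_mem ⟨h0, ht.2⟩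
      have hmeas : StronglyMeasurableAtFilter f (𝓝[≤] t) volume :=
        ⟨Icc 0 1, hmem', hf.aestronglyMeasurable measurableSet_Icc⟩
      have := intervalIntegral.integral_hasDerivWithinAt_right (s := Iic t) (t := Iic t)
        hint hmeas ((hf t ht).mono_of_mem_nhdsWithin hmem')
      exact this.mono (fun y hy => hy.2)
  refine (hleft.union hright).mono (fun y hy => ?_)
  rcases le_total y t with h | h
  · exact Or.inl ⟨hy.1, h⟩
  · exact Or.inr ⟨h, hy.2⟩

/-- Let `u` be a classical solution of the heat equation on
`[0,1] × [−1,0]` with `u(t,−1) = 0` and `u(0,0) = 0`, set `h(t) = ∫_0^t u(s,0) ds`,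
and let `v` be a classical solution of the wave equation on `[0,1] × [0,1]` with
`v(t,1) = 0`, `v(t,0) = h(t)`, and initial data `v₀, v₁` (`v₀` continuously
differentiable with derivative `v₀'`). If the interface equation with inertia
`∂_x u(t,0) + u(t,0) + ∂_t u(t,0) = v₀'(t) + v₁(t)` holds on `[0,1]`, then `h` is
twice continuously differentiable with `h' = u(·,0)`, `h'' = ∂_t u(·,0)` (the latter
continuous), `h(0) = h'(0) = 0`, and the point-mass coupling conditions of Problem 2
hold: `u(t,0) = h'(t) = ∂_t v(t,0)` and `h''(t) = ∂_x v(t,0) − ∂_x u(t,0)`. -/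

theorem interface_implies_pointmass_coupling
    (u ut ux uxx v vt vx vtt vtx vxx : ℝ → ℝ → ℝ) (h : ℝ → ℝ) (v₀ v₀' v₁ : ℝ → ℝ)
    (hu : IsHeatSol 1 u ut ux uxx)
    (hbu : ∀ t ∈ Icc (0:ℝ) 1, u t (-1) = 0)
    (hu00 : u 0 0 = 0)
    (hh : ∀ t, h t = ∫ s in (0:ℝ)..t, u s 0)
    (hv : IsWaveSol 1 v vt vx vtt vtx vxx)
    (hbv : ∀ t ∈ Icc (0:ℝ) 1, v t 1 = 0)
    (hdir : ∀ t ∈ Icc (0:ℝ) 1, v t 0 = h t)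
    (hv₀ : ∀ x ∈ Icc (0:ℝ) 1, v 0 x = v₀ x)
    (hv₁ : ∀ x ∈ Icc (0:ℝ) 1, vt 0 x = v₁ x)
    (hv₀d : ∀ x ∈ Icc (0:ℝ) 1, HasDerivAt v₀ (v₀' x) x)
    (hv₀c : ContinuousOn v₀' (Icc 0 1))
    (hint : ∀ t ∈ Icc (0:ℝ) 1, ux t 0 + u t 0 + ut t 0 = v₀' t + v₁ t) :
    h 0 = 0 ∧ u 0 0 = 0 ∧
    (∀ t ∈ Icc (0:ℝ) 1, HasDerivWithinAt h (u t 0) (Icc 0 1) t) ∧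
    (∀ t ∈ Icc (0:ℝ) 1, HasDerivWithinAt (fun s => u s 0) (ut t 0) (Icc 0 1) t) ∧
    ContinuousOn (fun t => ut t 0) (Icc 0 1) ∧
    (∀ t ∈ Icc (0:ℝ) 1, u t 0 = vt t 0 ∧ ut t 0 = vx t 0 - ux t 0) := by
  have h0mem : (0:ℝ) ∈ Icc (-1:ℝ) 0 := by norm_num
  have h0I : (0:ℝ) ∈ Icc (0:ℝ) 1 := by norm_num
  have huD : UniqueDiffOn ℝ (Icc (0:ℝ) 1) := uniqueDiffOn_Icc zero_lt_one
  have contf : ContinuousOn (fun s => u s 0) (Icc 0 1) := by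
    have : (fun s => u s 0) = (fun p : ℝ × ℝ => u p.1 p.2) ∘ (fun s => (s, (0:ℝ))) := rfl
    rw [this]
    exact hu.contu.comp ((continuous_id.prodMk continuous_const).continuousOn)
      (fun s hs => ⟨hs, h0mem⟩)
  have hfun : h = fun b => ∫ s in (0:ℝ)..b, u s 0 := funext hh
  have hderivh : ∀ t ∈ Icc (0:ℝ) 1, HasDerivWithinAt h (u t 0) (Icc 0 1) t := by
    intro t ht
    rw [hfun]
    exact hasDerivWithinAt_primitive_Icc contf ht
  have hvt0 : ∀ t ∈ Icc (0:ℝ) 1, vt t 0 = u t 0 := by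
    intro t ht
    have h1 : HasDerivWithinAt (fun τ => v τ 0) (vt t 0) (Icc 0 1) t :=
      (hv.hvt t ht 0 h0I).hasDerivWithinAt
    have h2 : HasDerivWithinAt (fun τ => v τ 0) (u t 0) (Icc 0 1) t :=
      (hderivh t ht).congr (fun τ hτ => hdir τ hτ) (hdir t ht)
    rw [← h1.derivWithin (huD t ht), ← h2.derivWithin (huD t ht)]
  have hvx0 : ∀ t ∈ Icc (0:ℝ) 1, vx 0 t = v₀' t := by
    intro t ht
    have h1 : HasDerivWithinAt (fun y => v 0 y) (vx 0 t) (Icc 0 1) t :=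
      (hv.hvx 0 h0I t ht).hasDerivWithinAt
    have h2 : HasDerivWithinAt (fun y => v 0 y) (v₀' t) (Icc 0 1) t :=
      ((hv₀d t ht).hasDerivWithinAt).congr (fun y hy => (hv₀ y hy)) (hv₀ t ht)
    rw [← h1.derivWithin (huD t ht), ← h2.derivWithin (huD t ht)]
  have hchar : ∀ t ∈ Icc (0:ℝ) 1, vt t 0 + vx t 0 = vt 0 t + vx 0 t := by
    intro t ht
    exact char_eq (fun a b => vt a b + vx a b) (fun a b => vtt a b + vtx a b)
      (fun a b => vtx a b + vxx a b)
      (hv.contvt.add hv.contvx)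
      (fun a ha b hb => (hv.hvtt a ha b hb).add (hv.hvxt a ha b hb))
      (fun a ha b hb => (hv.hvtx a ha b hb).add (hv.hvxx a ha b hb))
      (hv.contvtt.add hv.contvtx) (hv.contvtx.add hv.contvxx)
      (fun a ha b hb => by show vtt a b + vtx a b = vtx a b + vxx a b; rw [hv.wave a ha b hb]; ring) ht
  have contut : ContinuousOn (fun t => ut t 0) (Icc 0 1) := by
    have : (fun t => ut t 0) = (fun p : ℝ × ℝ => ut p.1 p.2) ∘ (fun t => (t, (0:ℝ))) := rfl
    rw [this]
    exact hu.contut.comp ((continuous_id.prodMk continuous_const).continuousOn)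
      (fun s hs => ⟨hs, h0mem⟩)
  refine ⟨by rw [hh]; simp, hu00, hderivh,
    fun t ht => (hu.hut t ht 0 h0mem).hasDerivWithinAt, contut, ?_⟩
  intro t ht
  have e1 := hvt0 t ht
  have e2 := hvx0 t ht
  have e3 := hchar t ht
  have e4 := hint t ht
  have e5 := hv₁ t ht
  exact ⟨e1.symm, by linarith⟩
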